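/- Suppose f = 2^m − 1 with m ≥ 3, and v, f satisfy v − f = 2^m u with u ≡ 0 (mod 3) and m odd, and suppose there is an abelian group G of order v − f with exactly f involutions admitting a (G, {2^f, 3^e}, 3, 1)-difference family. Then 9 divides u, i.e., v ≡ 2^m − 1 (mod 2^m · 9). -/

import Mathlib

open scoped Classical

/-- The multiset of differences of a triple (finite subset) of an abelian group. -/
noncomputable def tripleDiffs {G : Type*} [AddCommGroup G] (T : Finset G) : Multiset G :=
  ((T ×ˢ T).filter (fun p => p.1 ≠ p.2)).val.map (fun p => p.1 - p.2)

/-- The multiset of differences of a family of triples. -/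
noncomputable def famDiffs {G : Type*} [AddCommGroup G] (F : Finset (Finset G)) : Multiset G :=
  F.val.bind tripleDiffs

/-- Suppose `f = 2^m − 1` with `m ≥ 3` odd, `v − f = 2^m u` with `3 ∣ u`, and there is an
abelian group `G` of order `v − f` with exactly `f` involutions admitting a
`(G, {2^f, 3^e}, 3, 1)`-difference family. Then `9 ∣ u`, i.e. `v ≡ 2^m − 1 (mod 2^m · 9)`. -/
-- auxiliary lemma: two distinct order-3 subgroups with trivial intersection force 9 ∣ |G|
theorem nine_dvd_of_two_subgroups {G : Type*} [AddCommGroup G]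
    (S S' : AddSubgroup G) (hS : Nat.card ↥S = 3) (hS' : Nat.card ↥S' = 3)
    (hI : S ⊓ S' = ⊥) : 9 ∣ Nat.card G := by
  -- pick nonzero elements
  have hSnt : S ≠ ⊥ := by
    intro h; rw [h] at hS; simp at hS
  have hS'nt : S' ≠ ⊥ := by
    intro h; rw [h] at hS'; simp at hS'
  obtain ⟨s, hsS, hs0⟩ := (AddSubgroup.bot_or_exists_ne_zero S).resolve_left hSnt
  obtain ⟨s', hs'S, hs'0⟩ := (AddSubgroup.bot_or_exists_ne_zero S').resolve_left hS'nt
  have key : ∀ (T : AddSubgroup G) (t : G), t ∈ T → t ≠ 0 → Nat.card ↥T = 3 →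
      addOrderOf t = 3 := by
    intro T t htT ht0 hT
    have h3 : (3:ℕ) • (⟨t, htT⟩ : T) = 0 := by
      rw [← hT]; exact card_nsmul_eq_zero'
    have h3' : (3:ℕ) • t = 0 := by
      have := congrArg (AddSubgroup.subtype T) h3
      simpa using this
    have hdvd : addOrderOf t ∣ 3 := addOrderOf_dvd_of_nsmul_eq_zero h3'
    have := (Nat.prime_three).eq_one_or_self_of_dvd _ hdvd
    rcases this with h | h
    · exact absurd (AddMonoid.addOrderOf_eq_one_iff.mp h) ht0
    · exact h
  have hos : addOrderOf s = 3 := key S s hsS hs0 hS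
  have hos' : addOrderOf s' = 3 := key S' s' hs'S hs'0 hS'
  -- homs from ZMod 3
  have hz : ∀ t : G, addOrderOf t = 3 → ((zmultiplesHom G) t) (3:ℤ) = 0 := by
    intro t ht
    simp only [zmultiplesHom_apply]
    have : ((addOrderOf t : ℤ)) ∣ (3:ℤ) := by rw [ht]; norm_num
    exact addOrderOf_dvd_iff_zsmul_eq_zero.mp this
  let ψ : ZMod 3 →+ G := ZMod.lift 3 ⟨(zmultiplesHom G) s, hz s hos⟩
  let ψ' : ZMod 3 →+ G := ZMod.lift 3 ⟨(zmultiplesHom G) s', hz s' hos'⟩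
  have hmemψ : ∀ a, ψ a ∈ S := by
    intro a
    obtain ⟨k, rfl⟩ := ZMod.intCast_surjective a
    simpa only [ψ, ZMod.lift_coe, zmultiplesHom_apply] using AddSubgroup.zsmul_mem S hsS k
  have hmemψ' : ∀ a, ψ' a ∈ S' := by
    intro a
    obtain ⟨k, rfl⟩ := ZMod.intCast_surjective a
    simpa only [ψ', ZMod.lift_coe, zmultiplesHom_apply] using AddSubgroup.zsmul_mem S' hs'S k
  have hinjψ : Function.Injective ψ := by
    rw [ZMod.lift_injective]
    intro k hk
    simp only [zmultiplesHom_apply] at hk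
    rw [ZMod.intCast_zmod_eq_zero_iff_dvd]
    have : ((addOrderOf s : ℤ)) ∣ k := addOrderOf_dvd_iff_zsmul_eq_zero.mpr hk
    rwa [hos] at this
  have hinjψ' : Function.Injective ψ' := by
    rw [ZMod.lift_injective]
    intro k hk
    simp only [zmultiplesHom_apply] at hk
    rw [ZMod.intCast_zmod_eq_zero_iff_dvd]
    have : ((addOrderOf s' : ℤ)) ∣ k := addOrderOf_dvd_iff_zsmul_eq_zero.mpr hk
    rwa [hos'] at this
  let φ : ZMod 3 × ZMod 3 →+ G := ψ.coprod ψ'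
  have hinj : Function.Injective φ := by
    rw [injective_iff_map_eq_zero]
    rintro ⟨a, b⟩ hab
    simp only [φ, AddMonoidHom.coprod_apply] at hab
    have h1 : ψ a ∈ S ⊓ S' := by
      constructor
      · exact hmemψ a
      · have : ψ a = -ψ' b := by linear_combination (norm := abel) hab
        rw [this]; exact AddSubgroup.neg_mem S' (hmemψ' b)
    rw [hI, AddSubgroup.mem_bot] at h1
    have ha : a = 0 := hinjψ (by simpa using h1)
    have hb : b = 0 := by
      apply hinjψ'
      rw [ha] at hab; simpa using hab
    simp [ha, hb, Prod.ext_iff]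
  have := AddSubgroup.card_dvd_of_injective φ hinj
  simpa [Nat.card_prod, Nat.card_zmod] using this

theorem stmt_15 {G : Type*} [AddCommGroup G] [Fintype G]
    (m u v e f : ℕ) (hm : 3 ≤ m) (hmodd : Odd m)
    (hf : f = 2 ^ m - 1) (hfv : f < v)
    (hvf : v - f = 2 ^ m * u) (hu : u % 3 = 0)
    (hcard : Fintype.card G = v - f)
    (hinv : (Finset.univ.filter (fun x : G => x ≠ 0 ∧ x + x = 0)).card = f)
    (Sp : Finset (AddSubgroup G))
    (htriv : ∀ S ∈ Sp, ∀ S' ∈ Sp, S ≠ S' → S ⊓ S' = ⊥)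
    (horders : ∀ S ∈ Sp, Nat.card ↥S = 2 ∨ Nat.card ↥S = 3)
    (h2 : (Sp.filter (fun (S : AddSubgroup G) => Nat.card ↥S = 2)).card = f)
    (h3 : (Sp.filter (fun (S : AddSubgroup G) => Nat.card ↥S = 3)).card = e)
    (F : Finset (Finset G)) (hF3 : ∀ T ∈ F, T.card = 3)
    (hDF : famDiffs F = (Finset.univ.filter (fun g : G => ∀ S ∈ Sp, g ∉ S)).val) :
    9 ∣ u := by
  classical
  have hpow : (8:ℕ) ≤ 2 ^ m := by
    calc (8:ℕ) = 2 ^ 3 := by norm_num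
    _ ≤ 2 ^ m := Nat.pow_le_pow_right (by norm_num) hm
  have hf1 : 1 + f = 2 ^ m := by omega
  -- cardinality of the difference family's difference multiset
  have hTD : ∀ T ∈ F, Multiset.card (tripleDiffs T) = 6 := by
    intro T hT
    have h3T := hF3 T hT
    show Multiset.card ((((T ×ˢ T).filter (fun p => p.1 ≠ p.2)).val.map (fun p => p.1 - p.2))) = 6
    rw [Multiset.card_map]
    rw [show ((T ×ˢ T).filter (fun p => p.1 ≠ p.2)).val.card = (T.offDiag).card from by
      rw [Finset.card_val]; congr 1; ext p; simp [Finset.mem_offDiag, and_assoc]]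
    rw [Finset.offDiag_card, h3T]
  have hcardF : Multiset.card (famDiffs F) = 6 * F.card := by
    show Multiset.card (F.val.bind tripleDiffs) = 6 * F.card
    rw [Multiset.card_bind]
    have hcomp : (F.val.map (Multiset.card ∘ tripleDiffs)).sum
        = ∑ T ∈ F, Multiset.card (tripleDiffs T) := rfl
    rw [hcomp, Finset.sum_congr rfl hTD, Finset.sum_const, smul_eq_mul, mul_comm]
  -- the "covered" part of the group
  set B : Finset G := Sp.biUnion (fun S => (S : Set G).toFinset) with hB
  set B0 : Finset G := Sp.biUnion (fun S => ((S : Set G).toFinset).erase 0) with hB0def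
  have hSpne : Sp.Nonempty := by
    rw [← Finset.card_pos]
    have hle : (Sp.filter (fun (S : AddSubgroup G) => Nat.card ↥S = 2)).card ≤ Sp.card :=
      Finset.card_le_card (Finset.filter_subset _ _)
    omega
  have hcards : ∀ S : AddSubgroup G, (((S : Set G)).toFinset.erase 0).card = Nat.card ↥S - 1 := by
    intro S
    rw [Finset.card_erase_of_mem (Set.mem_toFinset.mpr S.zero_mem), Set.toFinset_card]
    simp [Nat.card_eq_fintype_card]
  have hB0card : B0.card = f + 2 * e := by
    rw [hB0def, Finset.card_biUnion]
    · have hstep : ∀ S ∈ Sp, (((S : Set G)).toFinset.erase 0).card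
          = if Nat.card ↥S = 2 then 1 else 2 := by
        intro S hS
        rw [hcards S]
        rcases horders S hS with h | h <;> rw [h] <;> norm_num
      rw [Finset.sum_congr rfl hstep, Finset.sum_ite, Finset.sum_const, Finset.sum_const]
      have hfe : Sp.filter (fun T : AddSubgroup G => ¬ Nat.card ↥T = 2)
          = Sp.filter (fun T : AddSubgroup G => Nat.card ↥T = 3) := by
        apply Finset.filter_congr
        intro T hT
        rcases horders T hT with h | h <;> rw [h] <;> norm_num
      rw [hfe, h3, h2, smul_eq_mul, smul_eq_mul]
      ring
    · intro S hS S' hS' hne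
      simp only [Function.onFun]; rw [Finset.disjoint_left]
      intro g hg hg'
      have h0 : g ≠ 0 := (Finset.mem_erase.mp hg).1
      have hgS : g ∈ S := by
        have := (Finset.mem_erase.mp hg).2
        simpa using this
      have hgS' : g ∈ S' := by
        have := (Finset.mem_erase.mp hg').2
        simpa using this
      have hmem : g ∈ S ⊓ S' := ⟨hgS, hgS'⟩
      rw [htriv S hS S' hS' hne] at hmem
      exact h0 (AddSubgroup.mem_bot.mp hmem)
  have hBins : B = insert 0 B0 := by
    ext g
    simp only [hB, hB0def, Finset.mem_biUnion, Finset.mem_insert, Finset.mem_erase,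
      Set.mem_toFinset, SetLike.mem_coe]
    constructor
    · rintro ⟨S, hS, hgS⟩
      by_cases hg0 : g = 0
      · exact Or.inl hg0
      · exact Or.inr ⟨S, hS, hg0, hgS⟩
    · rintro (rfl | ⟨S, hS, _, hgS⟩)
      · obtain ⟨S, hS⟩ := hSpne
        exact ⟨S, hS, S.zero_mem⟩
      · exact ⟨S, hS, hgS⟩
  have h0B0 : (0:G) ∉ B0 := by
    simp [hB0def]
  have hBcard : B.card = 1 + (f + 2 * e) := by
    rw [hBins, Finset.card_insert_of_notMem h0B0, hB0card]
    omega
  -- the uncovered part is the complement of B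
  have hU : (Finset.univ.filter (fun g : G => ∀ S ∈ Sp, g ∉ S)) = Bᶜ := by
    ext g
    simp [hB, Set.mem_toFinset]
  -- main counting identity
  have hcount : 6 * F.card + (1 + (f + 2 * e)) = Fintype.card G := by
    have := congrArg Multiset.card hDF
    rw [hcardF] at this
    have hval : Multiset.card (Finset.univ.filter (fun g : G => ∀ S ∈ Sp, g ∉ S)).val
        = (Finset.univ.filter (fun g : G => ∀ S ∈ Sp, g ∉ S)).card := rfl
    rw [hval, hU, Finset.card_compl, hBcard] at this
    have hble : B.card ≤ Fintype.card G := by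
      simpa using Finset.card_le_card (Finset.subset_univ B)
    rw [hBcard] at hble
    omega
  -- arithmetic mod 3
  obtain ⟨k, hk⟩ := hmodd
  have h4k : 4 ^ k % 3 = 1 := by
    rw [Nat.pow_mod]; norm_num
  have h2m : 2 ^ m % 3 = 2 := by
    have hsplit : 2 ^ m = 2 * 4 ^ k := by
      subst hk
      rw [pow_succ, pow_mul]
      norm_num [mul_comm]
    rw [hsplit]
    omega
  have hGmod : Fintype.card G % 3 = 0 := by
    rw [hcard, hvf, Nat.mul_mod, hu]
    simp
  have hemod : e % 3 = 2 := by omega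
  have he2 : 2 ≤ e := by omega
  -- extract two distinct subgroups of order 3
  obtain ⟨S, hSmem, S', hS'mem, hne⟩ := Finset.one_lt_card.mp
    (by rw [h3]; omega : 1 < (Sp.filter (fun (S : AddSubgroup G) => Nat.card ↥S = 3)).card)
  obtain ⟨hSsp, hScard⟩ := Finset.mem_filter.mp hSmem
  obtain ⟨hS'sp, hS'card⟩ := Finset.mem_filter.mp hS'mem
  have h9 : 9 ∣ Nat.card G :=
    nine_dvd_of_two_subgroups S S' hScard hS'card (htriv S hSsp S' hS'sp hne)
  rw [Nat.card_eq_fintype_card, hcard, hvf] at h9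
  have hcop : Nat.Coprime 9 (2 ^ m) := Nat.Coprime.pow_right m (by norm_num)
  exact hcop.dvd_of_dvd_mul_left h9
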